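/- For every pmf R on 𝒳 and every pmf P on 𝒳 with P(x)>0 for all x, D(R||P) ≥ (min_{x∈𝒳} P(x)) · χ²(R||P). -/

import Mathlib

open Real Finset

private noncomputable def phiFun : ℝ → ℝ := fun x => Real.log x - Real.log (1 - x) - 4 * x

private lemma phi_hasDeriv {x : ℝ} (hx : x ∈ Set.Ioo (0:ℝ) 1) :
    HasDerivAt phiFun (1/x + 1/(1-x) - 4) x := by
  obtain ⟨hx0, hx1⟩ := hx
  have h1 : (0:ℝ) < 1 - x := by linarith
  have hlog : HasDerivAt Real.log (1/x) x := by
    simpa [one_div] using Real.hasDerivAt_log hx0.ne'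
  have hlog2 : HasDerivAt (fun x => Real.log (1 - x)) (-(1/(1-x))) x := by
    have hc : HasDerivAt (fun x : ℝ => 1 - x) (-1) x := by
      simpa using (hasDerivAt_const x (1:ℝ)).fun_sub (hasDerivAt_id x)
    have := (Real.hasDerivAt_log h1.ne').comp x hc
    simpa [one_div, div_eq_mul_inv, Function.comp_def] using this
  have h4 : HasDerivAt (fun x : ℝ => 4 * x) 4 x := by
    simpa using (hasDerivAt_id x).const_mul (4:ℝ)
  have := (hlog.fun_sub hlog2).fun_sub h4
  refine this.congr_deriv ?_
  ring

private lemma phi_mono : MonotoneOn phiFun (Set.Ioo (0:ℝ) 1) := by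
  have hconv : Convex ℝ (Set.Ioo (0:ℝ) 1) := convex_Ioo 0 1
  have hdiff : DifferentiableOn ℝ phiFun (interior (Set.Ioo (0:ℝ) 1)) := by
    rw [interior_Ioo]
    exact fun x hx => (phi_hasDeriv hx).differentiableAt.differentiableWithinAt
  refine monotoneOn_of_deriv_nonneg hconv ?_ hdiff ?_
  · exact fun x hx => ((phi_hasDeriv hx).differentiableAt.continuousAt).continuousWithinAt
  · rw [interior_Ioo]
    intro x hx
    rw [(phi_hasDeriv hx).deriv]
    obtain ⟨hx0, hx1⟩ := hx
    have h1 : (0:ℝ) < 1 - x := by linarith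
    have heq : 1/x + 1/(1-x) = 1/(x*(1-x)) := by field_simp; ring
    rw [heq]
    rw [sub_nonneg, le_div_iff₀ (by positivity)]
    nlinarith [sq_nonneg (2*x - 1)]

private noncomputable def pinsF (b : ℝ) : ℝ → ℝ := fun x =>
  x * Real.log x - x * Real.log b + (1 - x) * Real.log (1 - x)
    - (1 - x) * Real.log (1 - b) - 2 * (x - b)^2

private lemma pinsF_continuous (b : ℝ) : Continuous (pinsF b) := by
  unfold pinsF
  have h1 : Continuous fun x : ℝ => x * Real.log x := Real.continuous_mul_log
  have h2 : Continuous fun x : ℝ => (1 - x) * Real.log (1 - x) :=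
    h1.comp (continuous_const.sub continuous_id)
  fun_prop

private lemma pinsF_hasDeriv {b x : ℝ} (hx : x ∈ Set.Ioo (0:ℝ) 1) :
    HasDerivAt (pinsF b) (phiFun x - phiFun b) x := by
  obtain ⟨hx0, hx1⟩ := hx
  have h1 : (0:ℝ) < 1 - x := by linarith
  have d1 : HasDerivAt (fun x : ℝ => x * Real.log x) (Real.log x + 1) x :=
    Real.hasDerivAt_mul_log hx0.ne'
  have d2 : HasDerivAt (fun x : ℝ => x * Real.log b) (Real.log b) x := by
    simpa using (hasDerivAt_id x).mul_const (Real.log b)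
  have hc : HasDerivAt (fun x : ℝ => 1 - x) (-1) x := by
    simpa using (hasDerivAt_const x (1:ℝ)).fun_sub (hasDerivAt_id x)
  have d3 : HasDerivAt (fun x : ℝ => (1 - x) * Real.log (1 - x))
      (-(Real.log (1 - x) + 1)) x := by
    have := (Real.hasDerivAt_mul_log h1.ne').comp x hc
    simpa [Function.comp_def] using this
  have d4 : HasDerivAt (fun x : ℝ => (1 - x) * Real.log (1 - b))
      (-Real.log (1 - b)) x := by
    simpa using hc.mul_const (Real.log (1 - b))
  have d5 : HasDerivAt (fun x : ℝ => 2 * (x - b)^2) (2 * (2 * (x - b))) x := by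
    have : HasDerivAt (fun x : ℝ => (x - b)^2) (2 * (x - b)) x := by
      simpa using ((hasDerivAt_id x).sub_const b).fun_pow 2
    simpa [mul_comm, mul_assoc, mul_left_comm] using this.const_mul (2:ℝ)
  have := (((d1.fun_sub d2).fun_add d3).fun_sub d4).fun_sub d5
  refine this.congr_deriv ?_
  unfold phiFun
  ring

private lemma pinsF_nonneg {a b : ℝ} (ha0 : 0 ≤ a) (ha1 : a ≤ 1)
    (hb0 : 0 < b) (hb1 : b < 1) : 0 ≤ pinsF b a := by
  have hFb : pinsF b b = 0 := by unfold pinsF; ring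
  have hbI : b ∈ Set.Ioo (0:ℝ) 1 := ⟨hb0, hb1⟩
  rcases le_total a b with hab | hab
  · -- antitone on Icc 0 b
    have hanti : AntitoneOn (pinsF b) (Set.Icc 0 b) := by
      refine antitoneOn_of_deriv_nonpos (convex_Icc 0 b)
        ((pinsF_continuous b).continuousOn) ?_ ?_
      · rw [interior_Icc]
        intro x hx
        exact (pinsF_hasDeriv ⟨hx.1, lt_trans hx.2 hb1⟩).differentiableAt.differentiableWithinAt
      · rw [interior_Icc]
        intro x hx
        have hxI : x ∈ Set.Ioo (0:ℝ) 1 := ⟨hx.1, lt_trans hx.2 hb1⟩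
        rw [(pinsF_hasDeriv hxI).deriv]
        have := phi_mono hxI hbI hx.2.le
        linarith
    have := hanti ⟨ha0, hab⟩ ⟨le_of_lt hb0, le_refl b⟩ hab
    rw [hFb] at this; linarith
  · -- monotone on Icc b 1
    have hmono : MonotoneOn (pinsF b) (Set.Icc b 1) := by
      refine monotoneOn_of_deriv_nonneg (convex_Icc b 1)
        ((pinsF_continuous b).continuousOn) ?_ ?_
      · rw [interior_Icc]
        intro x hx
        exact (pinsF_hasDeriv ⟨lt_trans hb0 hx.1, hx.2⟩).differentiableAt.differentiableWithinAt
      · rw [interior_Icc]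
        intro x hx
        have hxI : x ∈ Set.Ioo (0:ℝ) 1 := ⟨lt_trans hb0 hx.1, hx.2⟩
        rw [(pinsF_hasDeriv hxI).deriv]
        have := phi_mono hbI hxI hx.1.le
        linarith
    have := hmono ⟨le_refl b, hb1.le⟩ ⟨hab, ha1⟩ hab
    rw [hFb] at this; linarith

private lemma binary_pinsker {a b : ℝ} (ha0 : 0 ≤ a) (ha1 : a ≤ 1)
    (hb0 : 0 < b) (hb1 : b < 1) :
    2 * (a - b)^2 ≤ a * Real.log (a / b) + (1 - a) * Real.log ((1 - a) / (1 - b)) := by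
  have h1 : a * Real.log (a / b) = a * Real.log a - a * Real.log b := by
    rcases eq_or_lt_of_le ha0 with h | h
    · simp [← h]
    · rw [Real.log_div h.ne' hb0.ne']; ring
  have h2 : (1 - a) * Real.log ((1 - a) / (1 - b))
      = (1 - a) * Real.log (1 - a) - (1 - a) * Real.log (1 - b) := by
    rcases eq_or_lt_of_le ha1 with h | h
    · simp [h]
    · have h1a : (0:ℝ) < 1 - a := by linarith
      have h1b : (0:ℝ) < 1 - b := by linarith
      rw [Real.log_div h1a.ne' h1b.ne']; ring
  have := pinsF_nonneg ha0 ha1 hb0 hb1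
  unfold pinsF at this
  linarith

private lemma log_sum_ineq {𝒳 : Type*} (s : Finset 𝒳) (a b : 𝒳 → ℝ)
    (ha : ∀ x ∈ s, 0 ≤ a x) (hb : ∀ x ∈ s, 0 < b x) :
    (∑ x ∈ s, a x) * Real.log ((∑ x ∈ s, a x) / (∑ x ∈ s, b x))
      ≤ ∑ x ∈ s, a x * Real.log (a x / b x) := by
  rcases s.eq_empty_or_nonempty with rfl | hs
  · simp
  · set A := ∑ x ∈ s, a x with hA
    set B := ∑ x ∈ s, b x with hB
    have hBpos : 0 < B := Finset.sum_pos hb hs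
    have hjen := Real.convexOn_mul_log.map_sum_le (t := s)
      (w := fun x => b x / B) (p := fun x => a x / b x)
      (fun x hx => div_nonneg (hb x hx).le hBpos.le)
      (by rw [← Finset.sum_div, ← hB, div_self hBpos.ne'])
      (fun x hx => Set.mem_Ici.2 (div_nonneg (ha x hx) (hb x hx).le))
    have e1 : ∑ x ∈ s, (b x / B) • (a x / b x) = A / B := by
      rw [hA, Finset.sum_div]
      refine Finset.sum_congr rfl fun x hx => ?_
      have := (hb x hx).ne'
      have := hBpos.ne'
      simp only [smul_eq_mul]
      field_simp
    have e2 : ∀ x ∈ s, (b x / B) • ((a x / b x) * Real.log (a x / b x))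
        = (a x * Real.log (a x / b x)) / B := by
      intro x hx
      have := (hb x hx).ne'
      have := hBpos.ne'
      simp only [smul_eq_mul]
      field_simp
    rw [e1, Finset.sum_congr rfl e2, ← Finset.sum_div] at hjen
    have := mul_le_mul_of_nonneg_right hjen hBpos.le
    calc A * Real.log (A / B) = (A / B * Real.log (A / B)) * B := by
          field_simp
      _ ≤ ((∑ x ∈ s, a x * Real.log (a x / b x)) / B) * B := this
      _ = ∑ x ∈ s, a x * Real.log (a x / b x) := by field_simp

/-- A probability mass function on a finite set. -/
def IsPmf {𝒳 : Type*} [Fintype 𝒳] (P : 𝒳 → ℝ) : Prop :=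
  (∀ x, 0 ≤ P x) ∧ ∑ x, P x = 1

/-- KL divergence `D(R‖P) = ∑ₓ R(x) log(R(x)/P(x))`. -/
noncomputable def klDiv {𝒳 : Type*} [Fintype 𝒳] (R P : 𝒳 → ℝ) : ℝ :=
  ∑ x, R x * Real.log (R x / P x)

/-- χ²-divergence `χ²(R‖P) = ∑ₓ (R(x) − P(x))²/P(x)`. -/
noncomputable def chiSq {𝒳 : Type*} [Fintype 𝒳] (R P : 𝒳 → ℝ) : ℝ :=
  ∑ x, (R x - P x) ^ 2 / P x

/-- `D(R‖P) ≥ (minₓ P(x)) ⬝ χ²(R‖P)`. -/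
theorem kl_ge_min_mul_chiSq
    {𝒳 : Type*} [Fintype 𝒳] [Nonempty 𝒳] (hcard : 2 ≤ Fintype.card 𝒳)
    (R P : 𝒳 → ℝ) (hR : IsPmf R) (hP : IsPmf P) (hPpos : ∀ x, 0 < P x) :
    (Finset.univ.inf' Finset.univ_nonempty P) * chiSq R P ≤ klDiv R P := by
  obtain ⟨hR0, hR1⟩ := hR
  obtain ⟨hP0, hP1⟩ := hP
  set m := Finset.univ.inf' Finset.univ_nonempty P with hm
  set A : Finset 𝒳 := Finset.univ.filter (fun x => P x ≤ R x) with hA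
  set Ac : Finset 𝒳 := Finset.univ.filter (fun x => ¬ P x ≤ R x) with hAc
  have hmem : ∀ x ∈ A, P x ≤ R x := fun x hx => (Finset.mem_filter.1 hx).2
  have hmemc : ∀ x ∈ Ac, R x < P x := fun x hx =>
    lt_of_not_ge (Finset.mem_filter.1 hx).2
  set rA := ∑ x ∈ A, R x with hrA
  set pA := ∑ x ∈ A, P x with hpA
  have hsplitR : rA + ∑ x ∈ Ac, R x = 1 := by
    rw [hrA, hAc, Finset.sum_filter_add_sum_filter_not]; exact hR1
  have hsplitP : pA + ∑ x ∈ Ac, P x = 1 := by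
    rw [hpA, hAc, Finset.sum_filter_add_sum_filter_not]; exact hP1
  have hrc : ∑ x ∈ Ac, R x = 1 - rA := by linarith
  have hpc : ∑ x ∈ Ac, P x = 1 - pA := by linarith
  have hAne : A.Nonempty := by
    by_contra h
    rw [Finset.not_nonempty_iff_eq_empty, hA, Finset.filter_eq_empty_iff] at h
    have : (∑ x, R x) < ∑ x, P x :=
      Finset.sum_lt_sum_of_nonempty Finset.univ_nonempty
        (fun x hx => lt_of_not_ge (h hx))
    rw [hR1, hP1] at this; exact lt_irrefl 1 this
  have hpA0 : 0 < pA := Finset.sum_pos (fun x _ => hPpos x) hAne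
  have hrA1 : rA ≤ 1 := by
    have : 0 ≤ ∑ x ∈ Ac, R x := Finset.sum_nonneg fun x _ => hR0 x
    linarith
  have hrA0 : 0 ≤ rA := Finset.sum_nonneg fun x _ => hR0 x
  have hpArA : pA ≤ rA := Finset.sum_le_sum hmem
  have hpA1 : pA ≤ 1 := le_trans hpArA hrA1
  -- KL lower bound via log-sum inequality then binary Pinsker
  have h1 : rA * Real.log (rA / pA) ≤ ∑ x ∈ A, R x * Real.log (R x / P x) :=
    log_sum_ineq A R P (fun x _ => hR0 x) (fun x _ => hPpos x)
  have h2 : (1 - rA) * Real.log ((1 - rA) / (1 - pA))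
      ≤ ∑ x ∈ Ac, R x * Real.log (R x / P x) := by
    have := log_sum_ineq Ac R P (fun x _ => hR0 x) (fun x _ => hPpos x)
    rwa [hrc, hpc] at this
  have hKLsplit : klDiv R P
      = (∑ x ∈ A, R x * Real.log (R x / P x)) + ∑ x ∈ Ac, R x * Real.log (R x / P x) := by
    rw [klDiv, hA, hAc, Finset.sum_filter_add_sum_filter_not]
  have hPin : 2 * (rA - pA)^2
      ≤ rA * Real.log (rA / pA) + (1 - rA) * Real.log ((1 - rA) / (1 - pA)) := by
    rcases eq_or_lt_of_le hpA1 with hp1 | hp1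
    · have hr1 : rA = 1 := le_antisymm hrA1 (by linarith [hpArA, hp1])
      rw [hp1] at *
      rw [hr1]
      simp
    · exact binary_pinsker hrA0 hrA1 hpA0 hp1
  have hKL : 2 * (rA - pA)^2 ≤ klDiv R P := by
    rw [hKLsplit]; linarith
  -- chi-square upper bound
  have hchi1 : m * chiSq R P ≤ ∑ x, (R x - P x)^2 := by
    rw [chiSq, Finset.mul_sum]
    refine Finset.sum_le_sum fun x _ => ?_
    have hp := hPpos x
    have hmle : m ≤ P x := Finset.inf'_le _ (Finset.mem_univ x)
    calc m * ((R x - P x)^2 / P x)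
        ≤ P x * ((R x - P x)^2 / P x) :=
          mul_le_mul_of_nonneg_right hmle (div_nonneg (sq_nonneg _) hp.le)
      _ = (R x - P x)^2 := by field_simp
  have hsq1 : ∑ x ∈ A, (R x - P x)^2 ≤ (rA - pA)^2 := by
    have := Finset.sum_sq_le_sq_sum_of_nonneg
      (s := A) (f := fun x => R x - P x) (fun x hx => sub_nonneg.2 (hmem x hx))
    rwa [Finset.sum_sub_distrib] at this
  have hsq2 : ∑ x ∈ Ac, (R x - P x)^2 ≤ (rA - pA)^2 := by
    have heq : ∑ x ∈ Ac, (R x - P x)^2 = ∑ x ∈ Ac, (P x - R x)^2 :=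
      Finset.sum_congr rfl fun x _ => by ring
    have h := Finset.sum_sq_le_sq_sum_of_nonneg
      (s := Ac) (f := fun x => P x - R x)
      (fun x hx => sub_nonneg.2 (hmemc x hx).le)
    rw [Finset.sum_sub_distrib, hpc, hrc] at h
    rw [heq]
    calc ∑ x ∈ Ac, (P x - R x)^2 ≤ ((1 - pA) - (1 - rA))^2 := h
      _ = (rA - pA)^2 := by ring
  have hsplitsq : ∑ x, (R x - P x)^2
      = (∑ x ∈ A, (R x - P x)^2) + ∑ x ∈ Ac, (R x - P x)^2 := by
    rw [hA, hAc, Finset.sum_filter_add_sum_filter_not]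
  linarith
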